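/- For β ∈ ((29−√137)/32, 1), the point c₀ = √(−12(2−β)/(16β²−26β+5)) lies in the open interval (0,2), and K(c₀) = (1−β)²(13β²−14β−7)/(16β²−26β+5), where K(c) = ((1−β)²/48)[(16β²−26β+5)c⁴ + 24(2−β)c² + 48]. -/

import Mathlib

/-- For `(29−√137)/32 < β < 1`, the critical point `c₀` lies in `(0,2)` and the
value of `K` there is `(1−β)²(13β²−14β−7)/(16β²−26β+5)`. -/
theorem bistarlike_critical_point
    (β : ℝ) (hβ0 : (29 - Real.sqrt 137) / 32 < β) (hβ1 : β < 1)
    (K : ℝ → ℝ)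
    (hK : ∀ c, K c = ((1 - β) ^ 2 / 48) *
      ((16 * β ^ 2 - 26 * β + 5) * c ^ 4 + 24 * (2 - β) * c ^ 2 + 48)) :
    Real.sqrt (-12 * (2 - β) / (16 * β ^ 2 - 26 * β + 5)) ∈ Set.Ioo (0 : ℝ) 2 ∧
    K (Real.sqrt (-12 * (2 - β) / (16 * β ^ 2 - 26 * β + 5))) =
      (1 - β) ^ 2 * ((13 * β ^ 2 - 14 * β - 7) / (16 * β ^ 2 - 26 * β + 5)) := by
  have h137 : Real.sqrt 137 ^ 2 = 137 := Real.sq_sqrt (by norm_num)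
  have h137lt : Real.sqrt 137 < 12 := by
    nlinarith [Real.sqrt_nonneg 137]
  have hβlb : (17 : ℝ) / 32 < β := by
    have : (29 - 12) / 32 < (29 - Real.sqrt 137) / 32 := by linarith
    linarith
  have hA : 16 * β ^ 2 - 26 * β + 5 < 0 := by
    nlinarith [mul_pos (by linarith : (0:ℝ) < β - 17/32) (by linarith : (0:ℝ) < 1 - β)]
  have hQ : 16 * β ^ 2 - 29 * β + 11 < 0 := by
    have h1 : -Real.sqrt 137 < 32 * β - 29 := by linarith
    have h3 : (3:ℝ) < Real.sqrt 137 := by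
      have := Real.lt_sqrt (x := 3) (y := 137) (by norm_num)
      exact this.mpr (by norm_num)
    have h2 : 32 * β - 29 < Real.sqrt 137 := by linarith
    nlinarith [Real.sqrt_nonneg 137]
  set x : ℝ := -12 * (2 - β) / (16 * β ^ 2 - 26 * β + 5) with hxdef
  have hxpos : 0 < x := div_pos_of_neg_of_neg (by linarith) hA
  have hxlt : x < 4 := by
    rw [hxdef, div_lt_iff_of_neg hA]
    nlinarith
  have hsq : Real.sqrt x ^ 2 = x := Real.sq_sqrt hxpos.le
  refine ⟨⟨Real.sqrt_pos.mpr hxpos, ?_⟩, ?_⟩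
  · rw [show (2:ℝ) = Real.sqrt 4 by
      rw [show (4:ℝ) = 2^2 by norm_num, Real.sqrt_sq (by norm_num)]]
    exact Real.sqrt_lt_sqrt hxpos.le hxlt
  · rw [hK]
    have h4 : Real.sqrt x ^ 4 = x ^ 2 := by
      rw [show (4:ℕ) = 2*2 by norm_num, pow_mul, hsq]
    rw [h4, hsq, hxdef]
    have hA' : 16 * β ^ 2 - 26 * β + 5 ≠ 0 := ne_of_lt hA
    field_simp
    have hB : β * (β * 16 - 26) + 5 ≠ 0 := by intro h; apply hA'; linarith
    field_simp
    ring
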